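/- Every T_d-string [b₁,…,b_r] (generated by the inductive rules: [4] and [3,2,…,2,3] with (d−2) twos are T_d-strings for d=1 and d≥2 respectively, and if [b₁,…,b_r] is a T_d-string then so are [b₁+1,b₂,…,b_r,2] and [2,b₁,…,b_r+1]) evaluates, as a Hirzebruch–Jung continued fraction, to a fraction of the form dn²/(dna−1) for some positive integers n, a with gcd(a,n) = 1 and 0 < dna − 1 < dn². -/

import Mathlib

/-- The Hirzebruch–Jung continued fraction `[b₁,…,b_r] = b₁ − 1/(b₂ − 1/(⋯ − 1/b_r))`,
evaluated in `ℚ` (using the convention `1/0 = 0`, so `hj [b] = b`). -/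
def hj : List ℕ → ℚ
  | [] => 0
  | b :: l => (b : ℚ) - 1 / hj l

/-- `TString d l` : the list `l` is a `T_d`-string, generated inductively. -/
inductive TString : ℕ → List ℕ → Prop
  | base₁ : TString 1 [4]
  | base (d : ℕ) (hd : 2 ≤ d) : TString d (3 :: (List.replicate (d - 2) 2 ++ [3]))
  | left (d b : ℕ) (l : List ℕ) (h : TString d (b :: l)) :
      TString d ((b + 1) :: (l ++ [2]))
  | right (d b : ℕ) (l : List ℕ) (h : TString d (l ++ [b])) :
      TString d (2 :: (l ++ [b + 1]))

/-- Transfer "matrix" of the HJ continued fraction: `fm l` is the matrix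
`∏ [[bᵢ, -1],[1,0]]` recorded as a quadruple `(a, b, c, e)` for `[[a,b],[c,e]]`. -/
def fm : List ℕ → ℤ × ℤ × ℤ × ℤ
  | [] => (1, 0, 0, 1)
  | x :: l => ((x : ℤ) * (fm l).1 - (fm l).2.2.1, (x : ℤ) * (fm l).2.1 - (fm l).2.2.2,
      (fm l).1, (fm l).2.1)

lemma fm_cons (x : ℕ) (l : List ℕ) :
    fm (x :: l) = ((x : ℤ) * (fm l).1 - (fm l).2.2.1, (x : ℤ) * (fm l).2.1 - (fm l).2.2.2,
      (fm l).1, (fm l).2.1) := rfl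

lemma fm_append : ∀ (l : List ℕ) (x : ℕ),
    fm (l ++ [x]) = ((x : ℤ) * (fm l).1 + (fm l).2.1, -(fm l).1,
      (x : ℤ) * (fm l).2.2.1 + (fm l).2.2.2, -(fm l).2.2.1)
  | [], x => by simp [fm]
  | y :: l, x => by
    have ih := fm_append l x
    rw [List.cons_append, fm_cons, ih, fm_cons]
    exact congrArg₂ Prod.mk (by ring) (congrArg₂ Prod.mk (by ring)
      (congrArg₂ Prod.mk (by ring) (by ring)))

lemma fm_replicate : ∀ k : ℕ,
    fm (List.replicate k 2) = ((k : ℤ) + 1, -(k : ℤ), (k : ℤ), 1 - (k : ℤ))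
  | 0 => by simp [fm]
  | k + 1 => by
    have ih := fm_replicate k
    rw [List.replicate_succ, fm_cons, ih]
    exact congrArg₂ Prod.mk (by push_cast; ring) (congrArg₂ Prod.mk (by push_cast; ring)
      (congrArg₂ Prod.mk (by push_cast; ring) (by push_cast; ring)))

lemma hj_fm : ∀ l : List ℕ, (∀ x ∈ l, 2 ≤ x) →
    0 ≤ (fm l).2.2.1 ∧ (fm l).2.2.1 < (fm l).1 ∧
      hj l = ((fm l).1 : ℚ) / ((fm l).2.2.1 : ℚ)
  | [], _ => ⟨le_refl 0, by norm_num [fm], by simp [hj, fm]⟩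
  | x :: l, h => by
    obtain ⟨h1, h2, h3⟩ := hj_fm l (fun y hy => h y (List.mem_cons_of_mem _ hy))
    have hx : (2 : ℤ) ≤ (x : ℤ) := by exact_mod_cast h x List.mem_cons_self
    have hA : 0 < (fm l).1 := lt_of_le_of_lt h1 h2
    have e1 : (fm (x :: l)).1 = (x : ℤ) * (fm l).1 - (fm l).2.2.1 := rfl
    have e2 : (fm (x :: l)).2.2.1 = (fm l).1 := rfl
    refine ⟨by rw [e2]; exact hA.le, by rw [e1, e2]; nlinarith, ?_⟩
    have hAQ : ((fm l).1 : ℚ) ≠ 0 := by exact_mod_cast hA.ne'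
    rw [e1, e2]
    show (x : ℚ) - 1 / hj l = _
    rw [h3, one_div_div]
    push_cast
    field_simp

lemma TString.ge2 {d : ℕ} {l : List ℕ} (h : TString d l) : ∀ x ∈ l, 2 ≤ x := by
  induction h with
  | base₁ => intro x hx; simp at hx; omega
  | base d hd =>
    intro x hx
    simp [List.mem_replicate] at hx
    rcases hx with h | h | h <;> omega
  | left d b l h ih =>
    intro x hx
    simp at hx
    rcases hx with h | h | h
    · have := ih b (by simp); omega
    · exact ih x (by simp [h])
    · omega
  | right d b l h ih =>
    intro x hx
    simp at hx
    rcases hx with h | h | h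
    · omega
    · exact ih x (by simp [h])
    · have := ih b (by simp); omega

lemma TString.inv {d : ℕ} {l : List ℕ} (h : TString d l) :
    ∃ n a : ℕ, 0 < a ∧ a < n ∧ Nat.gcd a n = 1 ∧ 1 ≤ d ∧
      fm l = ((d : ℤ) * n ^ 2, -((d : ℤ) * n * ((n : ℤ) - a) - 1),
        (d : ℤ) * n * a - 1, -((d : ℤ) * a * ((n : ℤ) - a) - 1)) := by
  induction h with
  | base₁ =>
    refine ⟨2, 1, one_pos, one_lt_two, rfl, le_refl 1, ?_⟩
    norm_num [fm]
  | base d hd =>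
    refine ⟨2, 1, one_pos, one_lt_two, rfl, by omega, ?_⟩
    have hk : ((d - 2 : ℕ) : ℤ) = (d : ℤ) - 2 := by
      have h2 : (2 : ℕ) ≤ d := hd
      omega
    have happ := fm_append (List.replicate (d - 2) 2) 3
    rw [fm_replicate] at happ
    rw [fm_cons, happ, hk]
    exact congrArg₂ Prod.mk (by push_cast; ring) (congrArg₂ Prod.mk (by push_cast; ring)
      (congrArg₂ Prod.mk (by push_cast; ring) (by push_cast; ring)))
  | left d b l h ih =>
    obtain ⟨n, a, ha, han, hg, hd1, heq⟩ := ih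
    refine ⟨n + a, a, ha, by omega, ?_, hd1, ?_⟩
    · simpa [Nat.coprime_add_self_right] using hg
    · rw [fm_cons] at heq
      simp only [Prod.mk.injEq] at heq
      obtain ⟨q1, q2, q3, q4⟩ := heq
      have happ := fm_append l 2
      rw [fm_cons, happ]
      exact congrArg₂ Prod.mk (by push_cast; linear_combination 2*q1 + q2 + 2*q3 + q4)
        (congrArg₂ Prod.mk (by push_cast; linear_combination -q1 - q3)
        (congrArg₂ Prod.mk (by push_cast; linear_combination 2*q3 + q4)
        (by push_cast; linear_combination -q3)))
  | right d b l h ih =>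
    obtain ⟨n, a, ha, han, hg, hd1, heq⟩ := ih
    refine ⟨2 * n - a, n, by omega, by omega, ?_, hd1, ?_⟩
    · have hdl : Nat.gcd n (2 * n - a) ∣ n := Nat.gcd_dvd_left _ _
      have hdr : Nat.gcd n (2 * n - a) ∣ 2 * n - a := Nat.gcd_dvd_right _ _
      have hda : Nat.gcd n (2 * n - a) ∣ a := by
        have h2n : Nat.gcd n (2 * n - a) ∣ 2 * n := hdl.mul_left 2
        have := Nat.dvd_sub h2n hdr
        rwa [show 2 * n - (2 * n - a) = a by omega] at this
      have : Nat.gcd n (2 * n - a) ∣ Nat.gcd a n := Nat.dvd_gcd hda hdl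
      rw [hg] at this
      exact Nat.dvd_one.mp this
    · rw [fm_append] at heq
      simp only [Prod.mk.injEq] at heq
      obtain ⟨q1, q2, q3, q4⟩ := heq
      have happ := fm_append l (b + 1)
      have hc : ((2 * n - a : ℕ) : ℤ) = 2 * (n : ℤ) - a := by omega
      rw [fm_cons, happ, hc]
      exact congrArg₂ Prod.mk (by push_cast; linear_combination 2*q1 - 2*q2 - q3 + q4)
        (congrArg₂ Prod.mk (by push_cast; linear_combination 2*q2 - q4)
        (congrArg₂ Prod.mk (by push_cast; linear_combination q1 - q2)
        (by push_cast; linear_combination q2)))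

theorem TString_eval (d : ℕ) (l : List ℕ) (h : TString d l) :
    ∃ n a : ℕ, 0 < n ∧ 0 < a ∧ Nat.gcd a n = 1 ∧
      1 < d * n * a ∧ d * n * a - 1 < d * n ^ 2 ∧
      hj l = ((d : ℚ) * n ^ 2) / ((d : ℚ) * n * a - 1) := by
  obtain ⟨n, a, ha, han, hg, hd1, heq⟩ := h.inv
  obtain ⟨-, -, hhj⟩ := hj_fm l h.ge2
  have h0 : 0 < d * n := Nat.mul_pos (by omega) (by omega)
  have hlt : d * n * a < d * n * n := mul_lt_mul_of_pos_left han h0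
  have hsq : n ^ 2 = n * n := sq n
  have h2 : 1 * 2 * 1 ≤ d * n * a :=
    Nat.mul_le_mul (Nat.mul_le_mul (by omega) (by omega)) (by omega)
  have hsq2 : d * n ^ 2 = d * n * n := by ring
  refine ⟨n, a, by omega, ha, hg, by omega, by omega, ?_⟩
  rw [hhj, heq]
  push_cast
  ring_nf
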